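/- arXiv:2301.03393 — 5 statements merged into one kernel-verified Lean document; each statement's English description precedes it below -/
import Mathlib

section
/- Discrete Poincaré inequality: There exists a constant C > 0 such that for every u in R^{M×N}, the Euclidean norm of u minus its mean (times the all-ones matrix) is bounded by C times the isotropic total variation of u, i.e., ‖u - ū·𝟙‖₂ ≤ C‖∇u‖_{2,1}, where ū = (1/MN)∑_{i,j} u_{i,j}. -/
open scoped BigOperators

noncomputable def gradx {M N : ℕ} [NeZero N] (u : Matrix (Fin M) (Fin N) ℝ)
    (i : Fin M) (j : Fin N) : ℝ := u i j - u i (j - 1)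

noncomputable def grady {M N : ℕ} [NeZero M] (u : Matrix (Fin M) (Fin N) ℝ)
    (i : Fin M) (j : Fin N) : ℝ := u i j - u (i - 1) j

/-- Isotropic total variation ‖∇u‖_{2,1}. -/
noncomputable def isoTV {M N : ℕ} [NeZero M] [NeZero N]
    (u : Matrix (Fin M) (Fin N) ℝ) : ℝ :=
  ∑ i, ∑ j, Real.sqrt ((gradx u i j) ^ 2 + (grady u i j) ^ 2)

/-- Frobenius (Euclidean) norm of a matrix. -/
noncomputable def norm2 {M N : ℕ} (u : Matrix (Fin M) (Fin N) ℝ) : ℝ :=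
  Real.sqrt (∑ i, ∑ j, (u i j) ^ 2)

open Fin.NatCast in
lemma abs_sub_le_sum_abs {N : ℕ} [NeZero N] (f : Fin N → ℝ) (a b : Fin N) :
    |f a - f b| ≤ ∑ j, |f j - f (j - 1)| := by
  set t := (a - b).val with ht
  have key : f a - f b = ∑ k ∈ Finset.range t, (f (b + ((k+1 : ℕ) : Fin N)) - f (b + ((k : ℕ) : Fin N))) := by
    rw [Finset.sum_range_sub (fun k => f (b + ((k : ℕ) : Fin N)))]
    simp [ht, Fin.cast_val_eq_self, add_sub_cancel]
  have hterm : ∀ k : ℕ, f (b + ((k+1 : ℕ) : Fin N)) - f (b + ((k : ℕ) : Fin N))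
      = f (b + ((k : ℕ) : Fin N) + 1) - f ((b + ((k : ℕ) : Fin N) + 1) - 1) := by
    intro k
    push_cast
    rw [add_sub_cancel_right, add_assoc]
  have htN : t < N := (a - b).isLt
  calc |f a - f b| = |∑ k ∈ Finset.range t, (f (b + ((k+1:ℕ) : Fin N)) - f (b + ((k:ℕ) : Fin N)))| := by rw [key]
    _ ≤ ∑ k ∈ Finset.range t, |f (b + ((k+1:ℕ) : Fin N)) - f (b + ((k:ℕ) : Fin N))| :=
        Finset.abs_sum_le_sum_abs _ _
    _ = ∑ k ∈ Finset.range t, |f (b + ((k:ℕ):Fin N) + 1) - f ((b + ((k:ℕ):Fin N) + 1) - 1)| := by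
        refine Finset.sum_congr rfl fun k _ => by rw [hterm]
    _ ≤ ∑ j, |f j - f (j - 1)| := by
        have hinj : Set.InjOn (fun k : ℕ => b + ((k:ℕ):Fin N) + 1) (Finset.range t) := by
          intro k1 h1 k2 h2 h
          simp only [Finset.coe_range, Set.mem_Iio] at h1 h2
          have : ((k1:ℕ):Fin N) = ((k2:ℕ):Fin N) := by
            simpa using h
          have := congrArg Fin.val this
          rwa [Fin.val_cast_of_lt (h1.trans htN), Fin.val_cast_of_lt (h2.trans htN)] at this
        calc ∑ k ∈ Finset.range t, |f (b + ((k:ℕ):Fin N) + 1) - f ((b + ((k:ℕ):Fin N) + 1) - 1)|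
            = ∑ j ∈ (Finset.range t).image (fun k : ℕ => b + ((k:ℕ):Fin N) + 1), |f j - f (j - 1)| :=
              (Finset.sum_image (f := fun j => |f j - f (j - 1)|) (g := fun k : ℕ => b + ((k:ℕ):Fin N) + 1) (fun x hx y hy h => hinj (Finset.mem_coe.mpr hx) (Finset.mem_coe.mpr hy) h)).symm
          _ ≤ ∑ j, |f j - f (j - 1)| := Finset.sum_le_sum_of_subset_of_nonneg (Finset.subset_univ _)
              (fun _ _ _ => abs_nonneg _)

/-- Discrete Poincaré inequality: ‖u - ū𝟙‖₂ ≤ C ‖∇u‖_{2,1}. -/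
theorem discrete_poincare (M N : ℕ) [NeZero M] [NeZero N] :
    ∃ C > 0, ∀ u : Matrix (Fin M) (Fin N) ℝ,
      norm2 (fun i j => u i j - (∑ i', ∑ j', u i' j') / (M * N)) ≤ C * isoTV u := by
  have hM : (0:ℝ) < M := by exact_mod_cast Nat.pos_of_ne_zero (NeZero.ne M)
  have hN : (0:ℝ) < N := by exact_mod_cast Nat.pos_of_ne_zero (NeZero.ne N)
  have hMN : (0:ℝ) < (M:ℝ) * N := mul_pos hM hN
  refine ⟨2 * Real.sqrt ((M:ℝ) * N) + 1, by positivity, fun u => ?_⟩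
  have hTV0 : 0 ≤ isoTV u := by
    refine Finset.sum_nonneg fun i _ => Finset.sum_nonneg fun j _ => Real.sqrt_nonneg _
  have hSx : ∑ i, ∑ j, |gradx u i j| ≤ isoTV u := by
    refine Finset.sum_le_sum fun i _ => Finset.sum_le_sum fun j _ => ?_
    rw [← Real.sqrt_sq_eq_abs]
    exact Real.sqrt_le_sqrt (le_add_of_nonneg_right (sq_nonneg _))
  have hSy : ∑ i, ∑ j, |grady u i j| ≤ isoTV u := by
    refine Finset.sum_le_sum fun i _ => Finset.sum_le_sum fun j _ => ?_
    rw [← Real.sqrt_sq_eq_abs]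
    exact Real.sqrt_le_sqrt (le_add_of_nonneg_left (sq_nonneg _))
  have hpq : ∀ (i i' : Fin M) (j j' : Fin N), |u i j - u i' j'| ≤ 2 * isoTV u := by
    intro i i' j j'
    have h1 : |u i j - u i j'| ≤ isoTV u := by
      have := abs_sub_le_sum_abs (f := fun j => u i j) j j'
      refine this.trans ?_
      refine le_trans ?_ hSx
      exact Finset.single_le_sum (f := fun i => ∑ j, |gradx u i j|)
        (fun i _ => Finset.sum_nonneg fun j _ => abs_nonneg _) (Finset.mem_univ i)
    have h2 : |u i j' - u i' j'| ≤ isoTV u := by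
      have := abs_sub_le_sum_abs (f := fun i => u i j') i i'
      refine this.trans ?_
      refine le_trans ?_ hSy
      refine Finset.sum_le_sum fun i'' _ => ?_
      exact Finset.single_le_sum (f := fun j => |grady u i'' j|)
        (fun _ _ => abs_nonneg _) (Finset.mem_univ j')
    calc |u i j - u i' j'| ≤ |u i j - u i j'| + |u i j' - u i' j'| := abs_sub_le _ _ _
      _ ≤ 2 * isoTV u := by linarith
  have hmean : ∀ (i : Fin M) (j : Fin N),
      |u i j - (∑ i', ∑ j', u i' j') / ((M:ℝ) * N)| ≤ 2 * isoTV u := by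
    intro i j
    have heq : u i j - (∑ i', ∑ j', u i' j') / ((M:ℝ) * N)
        = (∑ i', ∑ j', (u i j - u i' j')) / ((M:ℝ) * N) := by
      have : ∑ i' : Fin M, ∑ j' : Fin N, (u i j - u i' j')
          = (M:ℝ) * N * u i j - ∑ i', ∑ j', u i' j' := by
        simp [Finset.sum_sub_distrib, Finset.card_univ, mul_comm, mul_assoc]
        ring
      rw [this]
      field_simp
    rw [heq, abs_div, abs_of_pos hMN, div_le_iff₀ hMN]
    calc |∑ i', ∑ j', (u i j - u i' j')| ≤ ∑ i', ∑ j', |u i j - u i' j'| := by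
          refine (Finset.abs_sum_le_sum_abs _ _).trans (Finset.sum_le_sum fun i' _ => ?_)
          exact Finset.abs_sum_le_sum_abs _ _
      _ ≤ ∑ i' : Fin M, ∑ j' : Fin N, 2 * isoTV u := by
          exact Finset.sum_le_sum fun i' _ => Finset.sum_le_sum fun j' _ => hpq i i' j j'
      _ = 2 * isoTV u * ((M:ℝ) * N) := by
          simp [Finset.sum_const, Finset.card_univ]
          ring
  have hfinal : norm2 (fun i j => u i j - (∑ i', ∑ j', u i' j') / ((M:ℝ) * N))
      ≤ Real.sqrt ((M:ℝ) * N) * (2 * isoTV u) := by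
    unfold norm2
    have hb : ∑ i : Fin M, ∑ j : Fin N, (u i j - (∑ i', ∑ j', u i' j') / ((M:ℝ) * N)) ^ 2
        ≤ (M:ℝ) * N * (2 * isoTV u) ^ 2 := by
      calc ∑ i : Fin M, ∑ j : Fin N, (u i j - (∑ i', ∑ j', u i' j') / ((M:ℝ) * N)) ^ 2
          ≤ ∑ _i : Fin M, ∑ _j : Fin N, (2 * isoTV u) ^ 2 := by
            refine Finset.sum_le_sum fun i _ => Finset.sum_le_sum fun j _ => ?_
            have := hmean i j
            have h0 : (0:ℝ) ≤ 2 * isoTV u := by linarith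
            calc (u i j - (∑ i', ∑ j', u i' j') / ((M:ℝ) * N)) ^ 2
                = |u i j - (∑ i', ∑ j', u i' j')/((M:ℝ)*N)| ^ 2 := (sq_abs _).symm
              _ ≤ (2 * isoTV u) ^ 2 := by
                  exact pow_le_pow_left₀ (abs_nonneg _) this 2
        _ = (M:ℝ) * N * (2 * isoTV u) ^ 2 := by
            simp [Finset.sum_const, Finset.card_univ]
            ring
    calc Real.sqrt (∑ i : Fin M, ∑ j : Fin N, (u i j - (∑ i', ∑ j', u i' j') / ((M:ℝ) * N)) ^ 2)
        ≤ Real.sqrt ((M:ℝ) * N * (2 * isoTV u) ^ 2) := Real.sqrt_le_sqrt hb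
      _ = Real.sqrt ((M:ℝ) * N) * (2 * isoTV u) := by
          rw [Real.sqrt_mul (le_of_lt hMN), Real.sqrt_sq (by linarith)]
  calc norm2 (fun i j => u i j - (∑ i', ∑ j', u i' j') / ((M:ℝ) * N))
      ≤ Real.sqrt ((M:ℝ) * N) * (2 * isoTV u) := hfinal
    _ ≤ (2 * Real.sqrt ((M:ℝ) * N) + 1) * isoTV u := by nlinarith [Real.sqrt_nonneg ((M:ℝ)*N)]
end

section
/- Existence of a global minimizer: Suppose f ∈ R^{M×N} with 0 < min_{i,j} f_{i,j} and ‖f‖_∞ < ∞, λ > 0, μ ≥ 0, α ∈ [0,1), and ker(A) ∩ ker(∇) = {0} for a linear operator A. Then the functional F(u) = λ⟨Au - f log(Au), 𝟙⟩ + (μ/2)‖∇u‖₂² + ‖∇u‖₁ - α‖∇u‖_{2,1} (defined where Au is entrywise positive) has a global minimizer. -/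
open scoped BigOperators

noncomputable def anisoTV {M N : ℕ} [NeZero M] [NeZero N]
    (u : Matrix (Fin M) (Fin N) ℝ) : ℝ :=
  ∑ i, ∑ j, (|gradx u i j| + |grady u i j|)

noncomputable def gradSq {M N : ℕ} [NeZero M] [NeZero N]
    (u : Matrix (Fin M) (Fin N) ℝ) : ℝ :=
  ∑ i, ∑ j, ((gradx u i j) ^ 2 + (grady u i j) ^ 2)

/-! ### Auxiliary lemmas -/

lemma my_log_lb {f t : ℝ} (hf : 0 < f) (ht : 0 < t) :
    f - f * Real.log f ≤ t - f * Real.log t := by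
  have h := Real.log_le_sub_one_of_pos (x := t / f) (by positivity)
  have hlog : Real.log (t / f) = Real.log t - Real.log f :=
    Real.log_div (ne_of_gt ht) (ne_of_gt hf)
  rw [hlog] at h
  have h2 : f * (Real.log t - Real.log f) ≤ f * (t / f - 1) :=
    mul_le_mul_of_nonneg_left h hf.le
  have h3 : f * (t / f - 1) = t - f := by field_simp
  nlinarith [h2]

lemma my_coercive_up {f t B : ℝ} (hf : 0 < f) (ht : 0 < t)
    (h : t - f * Real.log t ≤ B) : t ≤ 2*B - 2*f + 2*f*Real.log (2*f) := by
  have h1 := Real.log_le_sub_one_of_pos (x := t / (2*f)) (by positivity)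
  have hlog : Real.log (t / (2*f)) = Real.log t - Real.log (2*f) :=
    Real.log_div (ne_of_gt ht) (by positivity)
  rw [hlog] at h1
  have h2 : f * (Real.log t - Real.log (2*f)) ≤ f * (t / (2*f) - 1) :=
    mul_le_mul_of_nonneg_left h1 hf.le
  have h3 : f * (t / (2*f)) = t / 2 := by field_simp
  nlinarith [h2]

lemma my_coercive_down {f t B : ℝ} (hf : 0 < f) (ht : 0 < t)
    (h : t - f * Real.log t ≤ B) : Real.exp (-B / f) ≤ t := by
  have h1 : -B / f ≤ Real.log t := by
    rw [div_le_iff₀ hf] at *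
    nlinarith
  calc Real.exp (-B / f) ≤ Real.exp (Real.log t) := Real.exp_le_exp.2 h1
    _ = t := Real.exp_log ht

lemma my_tele {n : ℕ} [NeZero n] (v : Fin n → ℝ) (j : Fin n) :
    |v j - v 0| ≤ ∑ j', |v j' - v (j' - 1)| := by
  obtain ⟨n', rfl⟩ : ∃ n', n = n' + 1 := ⟨n - 1, by have := NeZero.ne n; omega⟩
  set e : ℕ → Fin (n'+1) := fun m => ⟨(m+1) % (n'+1), Nat.mod_lt _ (by omega)⟩ with he
  have hev : ∀ m, m + 1 < n' + 1 → ((e m : Fin (n'+1)) : ℕ) = m + 1 := by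
    intro m h; simp only [he]; exact Nat.mod_eq_of_lt h
  have hsub : ∀ m (h : m + 1 < n' + 1), e m - 1 = (⟨m, by omega⟩ : Fin (n'+1)) := by
    intro m h
    have hne : e m ≠ 0 := by
      intro hc
      have := congrArg Fin.val hc
      rw [hev m h] at this
      simp at this
    apply Fin.ext
    rw [Fin.coe_sub_one, if_neg hne, hev m h]
    simp
  have htel : v j - v 0 = ∑ m ∈ Finset.range j.val, (v (e m) - v (e m - 1)) := by
    have hkey := Finset.sum_range_sub
      (fun m => v ⟨min m j.val, lt_of_le_of_lt (min_le_right _ _) j.isLt⟩) j.val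
    have hterm : ∀ m ∈ Finset.range j.val,
        (v ⟨min (m+1) j.val, lt_of_le_of_lt (min_le_right _ _) j.isLt⟩
          - v ⟨min m j.val, lt_of_le_of_lt (min_le_right _ _) j.isLt⟩)
        = v (e m) - v (e m - 1) := by
      intro m hm
      rw [Finset.mem_range] at hm
      have h1 : m + 1 < n' + 1 := by omega
      have h2 : min (m+1) j.val = m + 1 := by omega
      have h3 : min m j.val = m := by omega
      have h4 : e m = (⟨m+1, h1⟩ : Fin (n'+1)) := Fin.ext (hev m h1)
      rw [hsub m h1, h4]
      congr 1 <;> congr 1 <;> apply Fin.ext <;> simp [h2, h3]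
    rw [Finset.sum_congr rfl hterm] at hkey
    simpa using hkey.symm
  rw [htel]
  refine le_trans (Finset.abs_sum_le_sum_abs _ _) ?_
  have hinj : ∀ m ∈ Finset.range j.val, ∀ m' ∈ Finset.range j.val, e m = e m' → m = m' := by
    intro m hm m' hm' hmm
    rw [Finset.mem_range] at hm hm'
    have := congrArg Fin.val hmm
    rw [hev m (by omega), hev m' (by omega)] at this
    omega
  calc ∑ m ∈ Finset.range j.val, |v (e m) - v (e m - 1)|
      = ∑ x ∈ (Finset.range j.val).image e, |v x - v (x - 1)| :=
        (Finset.sum_image (g := e) (f := fun x => |v x - v (x - 1)|) hinj).symm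
    _ ≤ ∑ x, |v x - v (x - 1)| :=
        Finset.sum_le_sum_of_subset_of_nonneg (Finset.subset_univ _)
          (fun _ _ _ => abs_nonneg _)

lemma my_aniso_nonneg {M N : ℕ} [NeZero M] [NeZero N]
    (u : Matrix (Fin M) (Fin N) ℝ) : 0 ≤ anisoTV u :=
  Finset.sum_nonneg fun _ _ => Finset.sum_nonneg fun _ _ =>
    add_nonneg (abs_nonneg _) (abs_nonneg _)

lemma my_gradSq_nonneg {M N : ℕ} [NeZero M] [NeZero N]
    (u : Matrix (Fin M) (Fin N) ℝ) : 0 ≤ gradSq u :=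
  Finset.sum_nonneg fun _ _ => Finset.sum_nonneg fun _ _ => by positivity

lemma my_iso_le_aniso {M N : ℕ} [NeZero M] [NeZero N]
    (u : Matrix (Fin M) (Fin N) ℝ) : isoTV u ≤ anisoTV u := by
  refine Finset.sum_le_sum fun i _ => Finset.sum_le_sum fun j _ => ?_
  have h1 : (gradx u i j) ^ 2 + (grady u i j) ^ 2 ≤ (|gradx u i j| + |grady u i j|) ^ 2 := by
    nlinarith [abs_nonneg (gradx u i j), abs_nonneg (grady u i j),
      sq_abs (gradx u i j), sq_abs (grady u i j)]
  calc Real.sqrt ((gradx u i j) ^ 2 + (grady u i j) ^ 2)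
      ≤ Real.sqrt ((|gradx u i j| + |grady u i j|) ^ 2) := Real.sqrt_le_sqrt h1
    _ = |gradx u i j| + |grady u i j| :=
        Real.sqrt_sq (add_nonneg (abs_nonneg _) (abs_nonneg _))

lemma my_entry_bound {M N : ℕ} [NeZero M] [NeZero N]
    (u : Matrix (Fin M) (Fin N) ℝ) (i : Fin M) (j : Fin N) :
    |u i j - u 0 0| ≤ anisoTV u := by
  have h1 : |u i j - u i 0| ≤ ∑ j', |gradx u i j'| := by
    simpa [gradx] using my_tele (fun j' => u i j') j
  have h2 : |u i 0 - u 0 0| ≤ ∑ i', |grady u i' 0| := by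
    simpa [grady] using my_tele (fun i' => u i' 0) i
  have h3 : anisoTV u = (∑ i', ∑ j', |gradx u i' j'|) + (∑ i', ∑ j', |grady u i' j'|) := by
    unfold anisoTV
    rw [← Finset.sum_add_distrib]
    refine Finset.sum_congr rfl fun i' _ => ?_
    rw [← Finset.sum_add_distrib]
  have h4 : (∑ j', |gradx u i j'|) ≤ ∑ i', ∑ j', |gradx u i' j'| :=
    Finset.single_le_sum (f := fun i' => ∑ j', |gradx u i' j'|)
      (fun i' _ => Finset.sum_nonneg fun _ _ => abs_nonneg _) (Finset.mem_univ i)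
  have h5 : (∑ i', |grady u i' 0|) ≤ ∑ i', ∑ j', |grady u i' j'| :=
    Finset.sum_le_sum fun i' _ =>
      Finset.single_le_sum (f := fun j' => |grady u i' j'|)
        (fun _ _ => abs_nonneg _) (Finset.mem_univ 0)
  calc |u i j - u 0 0| ≤ |u i j - u i 0| + |u i 0 - u 0 0| := abs_sub_le _ _ _
    _ ≤ (∑ j', |gradx u i j'|) + (∑ i', |grady u i' 0|) := add_le_add h1 h2
    _ ≤ anisoTV u := by rw [h3]; exact add_le_add h4 h5

/-- Existence of a global minimizer of the AITV-regularized Poisson smoothing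
functional F over the domain where Au is entrywise positive. -/
theorem exists_global_minimizer (M N : ℕ) [NeZero M] [NeZero N]
    (f : Matrix (Fin M) (Fin N) ℝ) (hf : ∀ i j, 0 < f i j)
    (lam μ α : ℝ) (hlam : 0 < lam) (hμ : 0 ≤ μ) (hα0 : 0 ≤ α) (hα1 : α < 1)
    (A : Matrix (Fin M) (Fin N) ℝ →ₗ[ℝ] Matrix (Fin M) (Fin N) ℝ)
    (hker : ∀ u : Matrix (Fin M) (Fin N) ℝ,
      A u = 0 → (∀ i j, gradx u i j = 0 ∧ grady u i j = 0) → u = 0)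
    (F : Matrix (Fin M) (Fin N) ℝ → ℝ)
    (hF : ∀ u, F u = lam * (∑ i, ∑ j, ((A u) i j - f i j * Real.log ((A u) i j)))
        + μ / 2 * gradSq u + anisoTV u - α * isoTV u)
    (hne : ∃ u : Matrix (Fin M) (Fin N) ℝ, ∀ i j, 0 < (A u) i j) :
    ∃ uStar : Matrix (Fin M) (Fin N) ℝ, (∀ i j, 0 < (A uStar) i j) ∧
      ∀ u : Matrix (Fin M) (Fin N) ℝ, (∀ i j, 0 < (A u) i j) → F uStar ≤ F u := by
  classical
  obtain ⟨u₀, hu₀⟩ := hne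
  set c₀ := F u₀ with hc₀
  have h1α : 0 < 1 - α := by linarith
  -- per-entry constants
  set low : Fin M → Fin N → ℝ := fun i j => f i j - f i j * Real.log (f i j) with hlow
  set L' : ℝ := ∑ i, ∑ j, low i j with hL'
  set B : Fin M → Fin N → ℝ := fun i j => c₀ / lam - L' + low i j with hB
  set ε : Fin M → Fin N → ℝ := fun i j => Real.exp (-(B i j) / f i j) with hε
  set tmax : Fin M → Fin N → ℝ :=
    fun i j => 2*(B i j) - 2*f i j + 2*f i j*Real.log (2*f i j) with htmax
  have hεpos : ∀ i j, 0 < ε i j := fun i j => Real.exp_pos _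
  set T₀ : ℝ := (c₀ - lam * L') / (1 - α) with hT₀
  -- sublevel estimates
  have hkey : ∀ u : Matrix (Fin M) (Fin N) ℝ, (∀ i j, 0 < (A u) i j) → F u ≤ c₀ →
      (∀ i j, (A u) i j ∈ Set.Icc (ε i j) (tmax i j)) ∧ anisoTV u ≤ T₀ := by
    intro u hupos hFu
    rw [hF u] at hFu
    have hglow : ∀ i j, low i j ≤ (A u) i j - f i j * Real.log ((A u) i j) :=
      fun i j => my_log_lb (hf i j) (hupos i j)
    have hD_low : L' ≤ ∑ i, ∑ j, ((A u) i j - f i j * Real.log ((A u) i j)) := by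
      rw [hL']
      exact Finset.sum_le_sum fun i _ => Finset.sum_le_sum fun j _ => hglow i j
    have hreg : (1 - α) * anisoTV u ≤ anisoTV u - α * isoTV u := by
      nlinarith [my_iso_le_aniso u, my_aniso_nonneg u]
    have hgrad : 0 ≤ μ / 2 * gradSq u :=
      mul_nonneg (by linarith) (my_gradSq_nonneg u)
    have hFu' : lam * (∑ i, ∑ j, ((A u) i j - f i j * Real.log ((A u) i j)))
        + (1 - α) * anisoTV u ≤ c₀ := by linarith
    have hDle : lam * (∑ i, ∑ j, ((A u) i j - f i j * Real.log ((A u) i j))) ≤ c₀ := by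
      nlinarith [mul_nonneg h1α.le (my_aniso_nonneg u)]
    have hDle' : (∑ i, ∑ j, ((A u) i j - f i j * Real.log ((A u) i j))) ≤ c₀ / lam :=
      (le_div_iff₀' hlam).2 hDle
    have haniso : anisoTV u ≤ T₀ := by
      rw [hT₀, le_div_iff₀ h1α]
      nlinarith [mul_le_mul_of_nonneg_left hD_low hlam.le]
    have hgB : ∀ i j, (A u) i j - f i j * Real.log ((A u) i j) ≤ B i j := by
      intro i j
      have h1 : ((A u) i j - f i j * Real.log ((A u) i j)) - low i j
          ≤ ∑ i', ∑ j', (((A u) i' j' - f i' j' * Real.log ((A u) i' j')) - low i' j') := by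
        calc ((A u) i j - f i j * Real.log ((A u) i j)) - low i j
            ≤ ∑ j', (((A u) i j' - f i j' * Real.log ((A u) i j')) - low i j') :=
              Finset.single_le_sum
                (f := fun j' => ((A u) i j' - f i j' * Real.log ((A u) i j')) - low i j')
                (fun j' _ => sub_nonneg.2 (hglow i j')) (Finset.mem_univ j)
          _ ≤ _ :=
              Finset.single_le_sum
                (f := fun i' => ∑ j', (((A u) i' j' - f i' j' * Real.log ((A u) i' j')) - low i' j'))
                (fun i' _ => Finset.sum_nonneg fun j' _ => sub_nonneg.2 (hglow i' j'))
                (Finset.mem_univ i)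
      have h2 : ∑ i', ∑ j', (((A u) i' j' - f i' j' * Real.log ((A u) i' j')) - low i' j')
          = (∑ i', ∑ j', ((A u) i' j' - f i' j' * Real.log ((A u) i' j'))) - L' := by
        rw [hL', ← Finset.sum_sub_distrib]
        exact Finset.sum_congr rfl fun i' _ => by rw [← Finset.sum_sub_distrib]
      rw [h2] at h1
      have hfin : A u i j - f i j * Real.log (A u i j) ≤ c₀ / lam - L' + low i j :=
        (sub_le_iff_le_add.1 h1).trans
          (by linarith [hDle'])
      simpa [hB] using hfin
    refine ⟨fun i j => ⟨?_, ?_⟩, haniso⟩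
    · exact my_coercive_down (hf i j) (hupos i j) (hgB i j)
    · exact my_coercive_up (hf i j) (hupos i j) (hgB i j)
  -- a nonzero entry of A applied to the constant matrix
  set ones : Matrix (Fin M) (Fin N) ℝ := fun _ _ => 1 with hones
  have hones_grad : ∀ i j, gradx ones i j = 0 ∧ grady ones i j = 0 := by
    intro i j
    constructor <;> simp [gradx, grady, hones]
  have hAones : A ones ≠ 0 := by
    intro hc
    have h0 := hker ones hc hones_grad
    have : (1 : ℝ) = 0 := by
      have := congrFun (congrFun h0 ⟨0, Nat.pos_of_ne_zero (NeZero.ne M)⟩)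
        ⟨0, Nat.pos_of_ne_zero (NeZero.ne N)⟩
      simpa [hones] using this
    norm_num at this
  obtain ⟨i₀, j₀, ha⟩ : ∃ i j, (A ones) i j ≠ 0 := by
    by_contra hc
    push_neg at hc
    exact hAones (funext fun i => funext fun j => hc i j)
  set a := (A ones) i₀ j₀ with haa
  set CA : ℝ := ∑ k, ∑ l, |(A (Matrix.single k l 1)) i₀ j₀| with hCA
  set R : ℝ := (tmax i₀ j₀ + T₀ * CA) / |a| + T₀ with hR
  -- bound on matrices in the sublevel set
  have hbound : ∀ u : Matrix (Fin M) (Fin N) ℝ,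
      (∀ i j, (A u) i j ∈ Set.Icc (ε i j) (tmax i j)) → anisoTV u ≤ T₀ →
      ∀ k l, |u k l| ≤ R := by
    intro u hIcc haniso k l
    have hc : ∀ k l, |u k l - u 0 0| ≤ T₀ :=
      fun k l => (my_entry_bound u k l).trans haniso
    set c := u 0 0 with hcc
    set v : Matrix (Fin M) (Fin N) ℝ := fun k l => u k l - c with hv
    have hu_eq : u = c • ones + v := by
      funext k l
      show u k l = (c • ones + v) k l
      show u k l = c * 1 + (u k l - c)
      ring
    have hvexp : v = ∑ k, ∑ l, (v k l) • Matrix.single k l (1:ℝ) := by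
      conv_lhs => rw [Matrix.matrix_eq_sum_single v]
      refine Finset.sum_congr rfl fun k _ => Finset.sum_congr rfl fun l _ => ?_
      rw [Matrix.smul_single, smul_eq_mul, mul_one]
    have hAv : (A v) i₀ j₀ = ∑ k, ∑ l, v k l * (A (Matrix.single k l 1)) i₀ j₀ := by
      conv_lhs => rw [hvexp]
      rw [map_sum]
      simp only [map_sum, map_smul]
      simp [Matrix.sum_apply, Matrix.smul_apply, smul_eq_mul]
    have hAvb : |(A v) i₀ j₀| ≤ T₀ * CA := by
      rw [hAv]
      calc |∑ k, ∑ l, v k l * (A (Matrix.single k l 1)) i₀ j₀|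
          ≤ ∑ k, ∑ l, |v k l * (A (Matrix.single k l 1)) i₀ j₀| := by
            refine le_trans (Finset.abs_sum_le_sum_abs _ _) ?_
            exact Finset.sum_le_sum fun k _ => Finset.abs_sum_le_sum_abs _ _
        _ ≤ ∑ k, ∑ l, T₀ * |(A (Matrix.single k l 1)) i₀ j₀| := by
            refine Finset.sum_le_sum fun k _ => Finset.sum_le_sum fun l _ => ?_
            rw [abs_mul]
            exact mul_le_mul_of_nonneg_right (hc k l) (abs_nonneg _)
        _ = T₀ * CA := by
            rw [hCA, Finset.mul_sum]
            exact Finset.sum_congr rfl fun k _ => (Finset.mul_sum _ _ _).symm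
    have hAu : (A u) i₀ j₀ = c * a + (A v) i₀ j₀ := by
      rw [hu_eq, map_add, map_smul]
      simp [Matrix.add_apply, Matrix.smul_apply, smul_eq_mul, haa]
    have htpos : 0 < (A u) i₀ j₀ := lt_of_lt_of_le (hεpos i₀ j₀) (hIcc i₀ j₀).1
    have htub : (A u) i₀ j₀ ≤ tmax i₀ j₀ := (hIcc i₀ j₀).2
    have htabs : |(A u) i₀ j₀| ≤ tmax i₀ j₀ := by
      rw [abs_of_pos htpos]; exact htub
    have hca : |c| * |a| ≤ tmax i₀ j₀ + T₀ * CA := by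
      have : |c * a| = |(A u) i₀ j₀ - (A v) i₀ j₀| := by rw [hAu]; ring_nf
      calc |c| * |a| = |c * a| := (abs_mul _ _).symm
        _ = |(A u) i₀ j₀ - (A v) i₀ j₀| := this
        _ ≤ |(A u) i₀ j₀| + |(A v) i₀ j₀| := abs_sub _ _
        _ ≤ tmax i₀ j₀ + T₀ * CA := add_le_add htabs hAvb
    have hcle : |c| ≤ (tmax i₀ j₀ + T₀ * CA) / |a| :=
      (le_div_iff₀ (abs_pos.2 ha)).2 hca
    calc |u k l| = |(u k l - c) + c| := by ring_nf
      _ ≤ |u k l - c| + |c| := abs_add_le _ _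
      _ ≤ T₀ + (tmax i₀ j₀ + T₀ * CA) / |a| := add_le_add (hc k l) hcle
      _ = R := by rw [hR]; ring
  -- the sublevel set
  set K : Set (Matrix (Fin M) (Fin N) ℝ) :=
    {u | (∀ i j, ε i j ≤ (A u) i j) ∧ F u ≤ c₀} with hKdef
  have hu₀K : u₀ ∈ K := ⟨fun i j => ((hkey u₀ hu₀ le_rfl).1 i j).1, le_rfl⟩
  have hKpos : ∀ u ∈ K, ∀ i j, 0 < (A u) i j :=
    fun u hu i j => lt_of_lt_of_le (hεpos i j) (hu.1 i j)
  -- continuity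
  have hAcont : Continuous (fun u : Matrix (Fin M) (Fin N) ℝ => A u) :=
    A.continuous_of_finiteDimensional
  have hAc : ∀ (i : Fin M) (j : Fin N),
      Continuous (fun u : Matrix (Fin M) (Fin N) ℝ => (A u) i j) :=
    fun i j => (continuous_apply j).comp ((continuous_apply i).comp hAcont)
  set C : Set (Matrix (Fin M) (Fin N) ℝ) := {u | ∀ i j, ε i j ≤ (A u) i j} with hCdef
  have hC_closed : IsClosed C := by
    have : C = ⋂ i, ⋂ j, (fun u : Matrix (Fin M) (Fin N) ℝ => (A u) i j) ⁻¹' Set.Ici (ε i j) := by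
      ext u
      simp [hCdef, Set.mem_iInter]
    rw [this]
    exact isClosed_iInter fun i => isClosed_iInter fun j =>
      (isClosed_Ici).preimage (hAc i j)
  have hrest : Continuous (fun u : Matrix (Fin M) (Fin N) ℝ =>
      μ / 2 * gradSq u + anisoTV u - α * isoTV u) := by
    unfold gradSq anisoTV isoTV gradx grady
    fun_prop
  have hdata : ContinuousOn (fun u : Matrix (Fin M) (Fin N) ℝ =>
      ∑ i, ∑ j, ((A u) i j - f i j * Real.log ((A u) i j))) C := by
    refine continuousOn_finset_sum _ fun i _ => continuousOn_finset_sum _ fun j _ => ?_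
    refine ((hAc i j).continuousOn).sub (continuousOn_const.mul ?_)
    refine ContinuousOn.log ((hAc i j).continuousOn) ?_
    intro u hu
    exact ne_of_gt (lt_of_lt_of_le (hεpos i j) (hu i j))
  have hFcont : ContinuousOn F C := by
    have hG : ContinuousOn (fun u : Matrix (Fin M) (Fin N) ℝ =>
        lam * (∑ i, ∑ j, ((A u) i j - f i j * Real.log ((A u) i j)))
        + (μ / 2 * gradSq u + anisoTV u - α * isoTV u)) C :=
      (continuousOn_const.mul hdata).add hrest.continuousOn
    refine hG.congr fun u _ => ?_
    rw [hF u]; ring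
  have hK_closed : IsClosed K := by
    have hKeq : K = C ∩ F ⁻¹' Set.Iic c₀ := by
      rfl
    rw [hKeq]
    exact hFcont.preimage_isClosed_of_isClosed hC_closed isClosed_Iic
  -- compactness
  set Q : Set (Matrix (Fin M) (Fin N) ℝ) :=
    Set.univ.pi (fun _ : Fin M => Set.univ.pi fun _ : Fin N => Set.Icc (-R) R) with hQdef
  have hQc : IsCompact Q :=
    isCompact_univ_pi fun _ => isCompact_univ_pi fun _ => isCompact_Icc
  have hKQ : K ⊆ Q := by
    intro u hu
    have h1 := hkey u (hKpos u hu) hu.2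
    have hb := hbound u h1.1 h1.2
    refine Set.mem_univ_pi.2 ?_
    intro k
    rw [Set.mem_univ_pi]
    intro l
    rw [Set.mem_Icc]
    exact abs_le.1 (hb k l)
  have hKcpt : IsCompact K := hQc.of_isClosed_subset hK_closed hKQ
  obtain ⟨uStar, huK, hmin⟩ :=
    hKcpt.exists_isMinOn ⟨u₀, hu₀K⟩ (hFcont.mono fun u hu => hu.1)
  refine ⟨uStar, hKpos uStar huK, ?_⟩
  intro u hu
  rcases le_or_gt (F u) c₀ with h | h
  · exact hmin ⟨fun i j => ((hkey u hu h).1 i j).1, h⟩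
  · exact le_trans (hmin hu₀K) h.le
end

section
/- Closed form of the ℓ₁ - αℓ₂ proximal operator, case 1: Let x ∈ R^n, β > 0, α ∈ [0,1], and suppose ‖x‖_∞ > β. Define ξ = sign(x) ∘ max(|x| - β, 0) (soft-thresholding). Then x* = (‖ξ‖₂ + αβ)·ξ/‖ξ‖₂ is a minimizer of y ↦ ‖y‖₁ - α‖y‖₂ + (1/(2β))‖x - y‖₂². -/
set_option maxHeartbeats 1000000

open scoped BigOperators

noncomputable def proxObj {n : ℕ} (x : Fin n → ℝ) (α β : ℝ) (y : Fin n → ℝ) : ℝ :=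
  (∑ i, |y i|) - α * Real.sqrt (∑ i, (y i) ^ 2)
    + 1 / (2 * β) * ∑ i, (x i - y i) ^ 2

/-- Closed form of the ℓ₁ - αℓ₂ proximal operator, case ‖x‖_∞ > β: with
ξ = sign(x) ∘ max(|x| - β, 0), the vector (‖ξ‖₂ + αβ)ξ/‖ξ‖₂ is a minimizer. -/
theorem prox_l1_minus_alpha_l2_case1 (n : ℕ) (x : Fin n → ℝ) (α β : ℝ)
    (hβ : 0 < β) (hα0 : 0 ≤ α) (hα1 : α ≤ 1)
    (hx : ∃ i, β < |x i|)
    (ξ : Fin n → ℝ) (hξ : ∀ i, ξ i = Real.sign (x i) * max (|x i| - β) 0)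
    (xStar : Fin n → ℝ)
    (hxStar : ∀ i, xStar i =
      (Real.sqrt (∑ j, (ξ j) ^ 2) + α * β) * ξ i / Real.sqrt (∑ j, (ξ j) ^ 2)) :
    ∀ y : Fin n → ℝ, proxObj x α β xStar ≤ proxObj x α β y := by
  intro y
  set S := Real.sqrt (∑ j, ξ j ^ 2) with hSdef
  obtain ⟨i0, hi0⟩ := hx
  have hxi0 : x i0 ≠ 0 := by
    intro h0; rw [h0] at hi0; simp at hi0; linarith
  have hsgn : ∀ i, x i ≠ 0 → |Real.sign (x i)| = 1 := by
    intro i hi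
    rcases hi.lt_or_gt with h | h
    · rw [Real.sign_of_neg h]; norm_num
    · rw [Real.sign_of_pos h]; norm_num
  have hsgnmul : ∀ i, Real.sign (x i) * |x i| = x i := by
    intro i
    rcases lt_trichotomy (x i) 0 with h | h | h
    · rw [Real.sign_of_neg h, abs_of_neg h]; ring
    · rw [h]; simp
    · rw [Real.sign_of_pos h, abs_of_pos h]; ring
  have hξi0 : ξ i0 ≠ 0 := by
    rw [hξ i0, max_eq_left (by linarith)]
    intro hc
    rcases mul_eq_zero.mp hc with hc | hc
    · rw [← abs_eq_zero] at hc; rw [hsgn i0 hxi0] at hc; norm_num at hc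
    · linarith
  have hsum_pos : 0 < ∑ j, ξ j ^ 2 :=
    lt_of_lt_of_le (by positivity) (Finset.single_le_sum (fun j _ => sq_nonneg (ξ j)) (Finset.mem_univ i0))
  have hS : 0 < S := Real.sqrt_pos.mpr hsum_pos
  have hS2 : S ^ 2 = ∑ j, ξ j ^ 2 := Real.sq_sqrt hsum_pos.le
  set u : Fin n → ℝ := fun i => ξ i / S with hu
  set w : Fin n → ℝ := fun i => if β < |x i| then Real.sign (x i) else x i / β with hwdef
  have hSα : 0 < S + α * β := by positivity
  -- per-coordinate facts
  have coord : ∀ i, |w i| ≤ 1 ∧ w i * xStar i = |xStar i| ∧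
      x i + α * β * u i - xStar i = β * w i := by
    intro i
    by_cases h : β < |x i|
    · have hxi : x i ≠ 0 := by intro h0; rw [h0] at h; simp at h; linarith
      have hsg := hsgnmul i
      have habs : |Real.sign (x i)| = 1 := hsgn i hxi
      have hsq : Real.sign (x i) * Real.sign (x i) = 1 := by
        have h2 := sq_abs (Real.sign (x i))
        rw [habs] at h2; nlinarith [h2]
      have hξi : ξ i = Real.sign (x i) * (|x i| - β) := by
        rw [hξ i, max_eq_left (by linarith)]
      have hwi : w i = Real.sign (x i) := by simp [hwdef, h]
      refine ⟨by rw [hwi, habs], ?_, ?_⟩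
      · rw [hwi, hxStar i, hξi]
        rw [abs_div, abs_mul, abs_mul, habs, abs_of_pos hSα, abs_of_pos hS,
          abs_of_pos (by linarith : (0:ℝ) < |x i| - β)]
        field_simp
        linear_combination (|x i| - β) * hsq
      · rw [hxStar i, hξi, hwi]
        show x i + α * β * (ξ i / S) - _ = _
        rw [hξi]
        field_simp
        nlinarith [hsg, hsq]
    · push_neg at h
      have hξi : ξ i = 0 := by rw [hξ i, max_eq_right (by linarith)]; ring
      have hxs : xStar i = 0 := by rw [hxStar i, hξi]; ring
      have hwi : w i = x i / β := by simp [hwdef, not_lt.mpr h]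
      refine ⟨?_, ?_, ?_⟩
      · rw [hwi, abs_div, abs_of_pos hβ, div_le_one hβ]; exact h
      · rw [hxs]; simp
      · rw [hwi, hxs]
        show x i + α * β * (ξ i / S) - 0 = _
        rw [hξi]
        field_simp
        ring
  have husq : ∑ i, u i ^ 2 = 1 := by
    have : ∀ i, u i ^ 2 = ξ i ^ 2 / S ^ 2 := fun i => by
      show (ξ i / S) ^ 2 = _; rw [div_pow]
    rw [Finset.sum_congr rfl fun i _ => this i, ← Finset.sum_div, ← hS2]
    field_simp
  have hxum : ∀ i, xStar i = (S + α * β) * u i := by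
    intro i; rw [hxStar i]; show _ = (S + α * β) * (ξ i / S); ring
  -- Cauchy-Schwarz
  have lin_le : ∑ i, u i * y i ≤ Real.sqrt (∑ i, y i ^ 2) := by
    have cs := Finset.sum_mul_sq_le_sq_mul_sq Finset.univ u y
    rw [husq, one_mul] at cs
    calc ∑ i, u i * y i ≤ |∑ i, u i * y i| := le_abs_self _
    _ = Real.sqrt ((∑ i, u i * y i) ^ 2) := (Real.sqrt_sq_eq_abs _).symm
    _ ≤ Real.sqrt (∑ i, y i ^ 2) := Real.sqrt_le_sqrt cs
  -- norm of xStar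
  have eq_star : Real.sqrt (∑ i, xStar i ^ 2) = S + α * β := by
    have h1 : ∑ i, xStar i ^ 2 = (S + α * β) ^ 2 := by
      have h2 : ∀ i, xStar i ^ 2 = (S + α * β) ^ 2 * u i ^ 2 := fun i => by
        rw [hxum i]; ring
      rw [Finset.sum_congr rfl fun i _ => h2 i, ← Finset.mul_sum, husq, mul_one]
    rw [h1]; exact Real.sqrt_sq hSα.le
  -- convexity of l1 part
  have A : (∑ i, |xStar i|) + (∑ i, w i * (y i - xStar i)) ≤ ∑ i, |y i| := by
    rw [← Finset.sum_add_distrib]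
    apply Finset.sum_le_sum
    intro i _
    have h1 : w i * y i ≤ |y i| := by
      calc w i * y i ≤ |w i * y i| := le_abs_self _
      _ = |w i| * |y i| := abs_mul _ _
      _ ≤ 1 * |y i| := by nlinarith [abs_nonneg (y i), (coord i).1]
      _ = |y i| := one_mul _
    nlinarith [(coord i).2.1]
  -- quadratic expansion
  have B : ∑ i, (x i - y i) ^ 2 = (∑ i, (y i - xStar i) ^ 2)
      + (∑ i, 2 * (xStar i - x i) * (y i - xStar i)) + ∑ i, (x i - xStar i) ^ 2 := by
    rw [← Finset.sum_add_distrib, ← Finset.sum_add_distrib]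
    exact Finset.sum_congr rfl fun i _ => by ring
  have Cc : ∑ i, 2 * (xStar i - x i) * (y i - xStar i)
      = 2 * β * α * (∑ i, u i * (y i - xStar i)) - 2 * β * (∑ i, w i * (y i - xStar i)) := by
    rw [Finset.mul_sum, Finset.mul_sum, ← Finset.sum_sub_distrib]
    refine Finset.sum_congr rfl fun i _ => ?_
    linear_combination (-2 * (y i - xStar i)) * (coord i).2.2
  have D : ∑ i, (y i - xStar i) ^ 2
      = (∑ i, y i ^ 2) - 2 * (S + α * β) * (∑ i, u i * y i) + (S + α * β) ^ 2 := by
    have h1 : ∀ i, (y i - xStar i) ^ 2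
        = y i ^ 2 - 2 * (S + α * β) * (u i * y i) + (S + α * β) ^ 2 * u i ^ 2 := fun i => by
      rw [hxum i]; ring
    rw [Finset.sum_congr rfl fun i _ => h1 i, Finset.sum_add_distrib, Finset.sum_sub_distrib,
      ← Finset.mul_sum, ← Finset.mul_sum, husq]
    ring
  have E : ∑ i, u i * (y i - xStar i) = (∑ i, u i * y i) - (S + α * β) := by
    have h1 : ∑ i, u i * xStar i = S + α * β := by
      have h2 : ∀ i, u i * xStar i = (S + α * β) * u i ^ 2 := fun i => by rw [hxum i]; ring
      rw [Finset.sum_congr rfl fun i _ => h2 i, ← Finset.mul_sum, husq, mul_one]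
    rw [← h1, ← Finset.sum_sub_distrib]
    exact Finset.sum_congr rfl fun i _ => by ring
  -- assemble
  have hNy : Real.sqrt (∑ i, y i ^ 2) ^ 2 = ∑ i, y i ^ 2 :=
    Real.sq_sqrt (Finset.sum_nonneg fun i _ => sq_nonneg _)
  have h2β : (0:ℝ) < 2 * β := by linarith
  rw [proxObj, proxObj, eq_star, ← mul_le_mul_iff_right₀ h2β]
  have e : ∀ a p : ℝ, 2 * β * (a + 1 / (2 * β) * p) = 2 * β * a + p := by
    intro a p; field_simp
  rw [e, e, B, Cc, D, E]
  set Ny := Real.sqrt (∑ i, y i ^ 2)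
  set U := ∑ i, u i * y i
  set W := ∑ i, w i * (y i - xStar i)
  set P := ∑ i, |xStar i|
  set Q := ∑ i, |y i|
  set K := ∑ i, (x i - xStar i) ^ 2
  -- goal : 2β(P - α(S+αβ)) + K ≤ 2β(Q - αNy) + (Y2 - 2mU + m² + (2βα(U-m) - 2βW) + K)
  have key : 0 ≤ Ny ^ 2 - 2 * (S + α * β) * U + (S + α * β) ^ 2 - 2 * α * β * (Ny - U) := by
    nlinarith [sq_nonneg (Ny - (S + α * β)), mul_nonneg hS.le (sub_nonneg.mpr lin_le)]
  linarith [mul_le_mul_of_nonneg_left A h2β.le, key, hNy]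
end

section
/- Closed form of the ℓ₁ - αℓ₂ proximal operator, case 3: Let x ∈ R^n, β > 0, α ∈ [0,1]. If ‖x‖_∞ ≤ (1-α)β, then y = 0 is a global minimizer of y ↦ ‖y‖₁ - α‖y‖₂ + (1/(2β))‖x - y‖₂². -/
open scoped BigOperators

/-- Closed form of the ℓ₁ - αℓ₂ proximal operator, case ‖x‖_∞ ≤ (1-α)β:
y = 0 is a global minimizer. -/
theorem prox_l1_minus_alpha_l2_case3 (n : ℕ) (x : Fin n → ℝ) (α β : ℝ)
    (hβ : 0 < β) (hα0 : 0 ≤ α) (hα1 : α ≤ 1)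
    (hx : ∀ i, |x i| ≤ (1 - α) * β) :
    ∀ y : Fin n → ℝ, proxObj x α β 0 ≤ proxObj x α β y := by
  intro y
  have hS : Real.sqrt (∑ i, (y i) ^ 2) ≤ ∑ i, |y i| := by
    rw [show (∑ i, (y i) ^ 2) = ∑ i, |y i| ^ 2 by simp [sq_abs]]
    calc Real.sqrt (∑ i, |y i| ^ 2) ≤ Real.sqrt ((∑ i, |y i|) ^ 2) := by
          apply Real.sqrt_le_sqrt
          exact Finset.sum_sq_le_sq_sum_of_nonneg (fun i _ => abs_nonneg _)
      _ = ∑ i, |y i| := Real.sqrt_sq (Finset.sum_nonneg fun i _ => abs_nonneg _)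
  have hxy : ∑ i, x i * y i ≤ (1 - α) * β * ∑ i, |y i| := by
    rw [Finset.mul_sum]
    apply Finset.sum_le_sum
    intro i _
    calc x i * y i ≤ |x i * y i| := le_abs_self _
      _ = |x i| * |y i| := abs_mul _ _
      _ ≤ (1 - α) * β * |y i| := mul_le_mul_of_nonneg_right (hx i) (abs_nonneg _)
  have hexp : ∑ i, (x i - y i) ^ 2
      = ∑ i, x i ^ 2 - 2 * (∑ i, x i * y i) + ∑ i, y i ^ 2 := by
    rw [Finset.mul_sum, ← Finset.sum_sub_distrib, ← Finset.sum_add_distrib]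
    apply Finset.sum_congr rfl
    intro i _; ring
  have hy2 : (0:ℝ) ≤ ∑ i, (y i) ^ 2 := Finset.sum_nonneg fun i _ => sq_nonneg _
  have hkey : 0 ≤ β * α * ((∑ i, |y i|) - Real.sqrt (∑ i, (y i) ^ 2)) :=
    mul_nonneg (mul_nonneg hβ.le hα0) (sub_nonneg.2 hS)
  have h0 : Real.sqrt (∑ _i : Fin n, (0:ℝ) ^ 2) = 0 := by simp
  simp only [proxObj, Pi.zero_apply, abs_zero, Finset.sum_const_zero, sub_zero, h0,
    mul_zero, hexp, zero_sub, zero_add, one_mul]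
  rw [← sub_nonneg]
  have h2β : (0:ℝ) < 2 * β := by linarith
  field_simp
  nlinarith [hkey, hxy, hy2]
end

section
/- Closed form of the ℓ₁ - αℓ₂ proximal operator, case 2: Let x ∈ R^n, β > 0, α ∈ [0,1], and suppose (1-α)β < ‖x‖_∞ ≤ β. Choose i ∈ argmax_j |x_j| and define x* by x*_i = (|x_i| + (α-1)β) sign(x_i) and x*_j = 0 for j ≠ i. Then x* minimizes y ↦ ‖y‖₁ - α‖y‖₂ + (1/(2β))‖x - y‖₂². -/
open scoped BigOperators

/-- Closed form of the ℓ₁ - αℓ₂ proximal operator, case (1-α)β < ‖x‖_∞ ≤ β: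
the 1-sparse vector supported at a maximal-magnitude entry i, with value
(|x_i| + (α-1)β) sign(x_i), is a minimizer. -/
theorem prox_l1_minus_alpha_l2_case2 (n : ℕ) (x : Fin n → ℝ) (α β : ℝ)
    (hβ : 0 < β) (hα0 : 0 ≤ α) (hα1 : α ≤ 1)
    (i : Fin n) (hmax : ∀ j, |x j| ≤ |x i|)
    (hlow : (1 - α) * β < |x i|) (hup : ∀ j, |x j| ≤ β)
    (xStar : Fin n → ℝ)
    (hxStar : ∀ j, xStar j =
      if j = i then (|x i| + (α - 1) * β) * Real.sign (x i) else 0) :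
    ∀ y : Fin n → ℝ, proxObj x α β xStar ≤ proxObj x α β y := by
  intro y
  set c : ℝ := |x i| + (α - 1) * β with hc_def
  have hc : 0 < c := by nlinarith
  have hxi : x i ≠ 0 := by
    intro h; rw [h, abs_zero] at hlow; nlinarith
  set s : ℝ := Real.sign (x i) with hs_def
  have hsx : s * x i = |x i| := by
    rcases lt_trichotomy (x i) 0 with h | h | h
    · rw [hs_def, Real.sign_of_neg h, abs_of_neg h]; ring
    · exact absurd h hxi
    · rw [hs_def, Real.sign_of_pos h, abs_of_pos h]; ring
  have hs2 : s ^ 2 = 1 := by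
    rcases lt_trichotomy (x i) 0 with h | h | h
    · rw [hs_def, Real.sign_of_neg h]; norm_num
    · exact absurd h hxi
    · rw [hs_def, Real.sign_of_pos h]; norm_num
  have habs_s : |s| = 1 := by
    rcases lt_trichotomy (x i) 0 with h | h | h
    · rw [hs_def, Real.sign_of_neg h]; norm_num
    · exact absurd h hxi
    · rw [hs_def, Real.sign_of_pos h]; norm_num
  set X : ℝ := ∑ j, x j ^ 2 with hX_def
  -- value of the objective at xStar
  have h1 : (∑ j, |xStar j|) = c := by
    rw [Fintype.sum_eq_single i (fun j hj => by simp [hxStar, hj])]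
    rw [hxStar i, if_pos rfl, abs_mul, habs_s, abs_of_pos hc]; ring
  have h2 : (∑ j, xStar j ^ 2) = c ^ 2 := by
    rw [Fintype.sum_eq_single i (fun j hj => by simp [hxStar, hj])]
    rw [hxStar i, if_pos rfl, mul_pow, hs2]; ring
  have h3 : (∑ j, x j * xStar j) = c * |x i| := by
    rw [Fintype.sum_eq_single i (fun j hj => by simp [hxStar, hj])]
    rw [hxStar i, if_pos rfl, ← hsx]; ring
  have h4 : (∑ j, (x j - xStar j) ^ 2) = X + c ^ 2 - 2 * (c * |x i|) := by
    have : ∀ j, (x j - xStar j) ^ 2 = x j ^ 2 + xStar j ^ 2 - 2 * (x j * xStar j) := by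
      intro j; ring
    simp_rw [this, Finset.sum_sub_distrib, Finset.sum_add_distrib, h2, ← Finset.mul_sum, h3]
    rfl
  have hsqrt : Real.sqrt (∑ j, xStar j ^ 2) = c := by
    rw [h2, Real.sqrt_sq hc.le]
  have hstar : proxObj x α β xStar = (X - c ^ 2) / (2 * β) := by
    rw [proxObj, h1, hsqrt, h4]
    have h5 : |x i| = c + (1 - α) * β := by rw [hc_def]; ring
    rw [h5]
    field_simp
    ring
  -- lower bound for the objective at y
  set A : ℝ := ∑ j, |y j| with hA_def
  set r : ℝ := Real.sqrt (∑ j, y j ^ 2) with hr_def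
  have hr0 : 0 ≤ r := Real.sqrt_nonneg _
  have hr2 : r ^ 2 = ∑ j, y j ^ 2 :=
    Real.sq_sqrt (Finset.sum_nonneg fun j _ => sq_nonneg _)
  have hl1 : r ≤ A := by
    rw [hr_def]
    have hb : (∑ j, y j ^ 2) ≤ A ^ 2 := by
      have := Finset.sum_sq_le_sq_sum_of_nonneg (s := Finset.univ)
        (f := fun j => |y j|) (fun j _ => abs_nonneg _)
      simpa [sq_abs] using this
    calc Real.sqrt (∑ j, y j ^ 2) ≤ Real.sqrt (A ^ 2) := Real.sqrt_le_sqrt hb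
      _ = A := Real.sqrt_sq (Finset.sum_nonneg fun j _ => abs_nonneg _)
  have hxy : (∑ j, x j * y j) ≤ |x i| * A := by
    rw [hA_def, Finset.mul_sum]
    refine Finset.sum_le_sum fun j _ => ?_
    calc x j * y j ≤ |x j * y j| := le_abs_self _
      _ = |x j| * |y j| := abs_mul _ _
      _ ≤ |x i| * |y j| := by
          exact mul_le_mul_of_nonneg_right (hmax j) (abs_nonneg _)
  have h6 : (∑ j, (x j - y j) ^ 2) = X + r ^ 2 - 2 * ∑ j, x j * y j := by
    have : ∀ j, (x j - y j) ^ 2 = x j ^ 2 + y j ^ 2 - 2 * (x j * y j) := by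
      intro j; ring
    simp_rw [this, Finset.sum_sub_distrib, Finset.sum_add_distrib, ← hr2, ← Finset.mul_sum]
    rfl
  have hβi : |x i| ≤ β := hup i
  rw [hstar, proxObj, ← hA_def, ← hr_def, h6]
  have e1 : 2 * r * (β - |x i|) ≤ 2 * β * A - 2 * (∑ j, x j * y j) := by
    nlinarith [hxy, mul_nonneg (sub_nonneg.mpr hl1) (sub_nonneg.mpr hβi)]
  have e2 : (0:ℝ) ≤ r ^ 2 - 2 * (r * c) + c ^ 2 := by nlinarith [sq_nonneg (r - c)]
  have e3 : r * c = r * |x i| + r * ((α - 1) * β) := by rw [hc_def]; ring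
  have goal2 : 0 ≤ 2 * β * A - 2 * α * β * r + r ^ 2 - 2 * (∑ j, x j * y j) + c ^ 2 := by
    linarith [e1, e2, e3]
  have hdiff : (A - α * r + 1 / (2 * β) * (X + r ^ 2 - 2 * ∑ j, x j * y j))
      - (X - c ^ 2) / (2 * β)
      = (2 * β * A - 2 * α * β * r + r ^ 2 - 2 * (∑ j, x j * y j) + c ^ 2) / (2 * β) := by
    field_simp
    ring
  have := div_nonneg goal2 (by linarith : (0:ℝ) ≤ 2 * β)
  linarith [hdiff, this]
end
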